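/- arXiv:1912.11934 — 3 statements merged into one kernel-verified Lean document; each statement's English description precedes it below -/
import Mathlib

section
/- Let a : [0,1] × ℝ → ℝ be continuous, with |a(ξ,s)| ≥ Λ₀ > 0 for all (ξ,s), Lipschitz in its second argument with Lipschitz constant L, and suppose τ ∈ ℝ is a μ-almost period of a, i.e. |a(ξ, s + τ) − a(ξ, s)| ≤ μ for all (ξ,s). Let ω(·, x, t) solve ∂_ξ ω = 1/a(ξ, ω), ω(x,x,t) = t. Then for all η, x ∈ [0,1] and t ∈ ℝ, |ω(η, x, t) + τ − ω(η, x, t + τ)| ≤ (μ/Λ₀²) · exp(L/Λ₀²). -/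
open Real Set


/-- Two-sided Gronwall: if `u x = 0` and `|u'| ≤ K |u| + ε` everywhere, then
`|u η| ≤ gronwallBound 0 K ε |η - x|`. -/
lemma gronwall_two_sided (u u' : ℝ → ℝ) (K ε x : ℝ)
    (hder : ∀ ξ, HasDerivAt u (u' ξ) ξ)
    (hbound : ∀ ξ, |u' ξ| ≤ K * |u ξ| + ε)
    (hx : u x = 0) :
    ∀ η, |u η| ≤ gronwallBound 0 K ε |η - x| := by
  -- one-sided version to the right
  have right : ∀ (v v' : ℝ → ℝ), (∀ ξ, HasDerivAt v (v' ξ) ξ) →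
      (∀ ξ, |v' ξ| ≤ K * |v ξ| + ε) → v x = 0 →
      ∀ η, x ≤ η → |v η| ≤ gronwallBound 0 K ε (η - x) := by
    intro v v' hd hb h0 η hη
    have := norm_le_gronwallBound_of_norm_deriv_right_le (f := v) (f' := v') (δ := 0) (a := x) (b := η)
      (fun ξ _ => (hd ξ).continuousAt.continuousWithinAt)
      (fun ξ _ => (hd ξ).hasDerivWithinAt)
      (by simp [h0]) (fun ξ _ => hb ξ) η ⟨hη, le_rfl⟩
    simpa using this
  intro η
  rcases le_total x η with h | h
  · rw [show |η - x| = η - x from abs_of_nonneg (by linarith)]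
    exact right u u' hder hbound hx η h
  · -- reflect: v s = u (2x - s)
    set v : ℝ → ℝ := fun s => u (2 * x - s) with hv
    have hd : ∀ ξ, HasDerivAt v (-(u' (2 * x - ξ))) ξ := by
      intro ξ
      have : HasDerivAt (fun s : ℝ => 2 * x - s) (-1) ξ := by
        simpa using ((hasDerivAt_id ξ).const_sub (2 * x))
      exact ((hder (2 * x - ξ)).comp ξ this).congr_deriv (by ring)
    have hb : ∀ ξ, |-(u' (2 * x - ξ))| ≤ K * |v ξ| + ε := by
      intro ξ; rw [abs_neg]; exact hbound (2 * x - ξ)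
    have h0 : v x = 0 := by simp [hv, two_mul, hx]
    have := right v _ hd hb h0 (2 * x - η) (by linarith)
    have hvv : v (2 * x - η) = u η := by simp [hv]
    rw [hvv] at this
    rw [show |η - x| = 2 * x - η - x from by rw [abs_of_nonpos (by linarith)]; ring]
    exact this

lemma gronwallBound_le (K ε s : ℝ) (hK : 0 ≤ K) (hε : 0 ≤ ε) (hs0 : 0 ≤ s) (hs1 : s ≤ 1) :
    gronwallBound 0 K ε s ≤ ε * Real.exp K := by
  rcases eq_or_lt_of_le hK with h | hKpos
  · rw [← h, gronwallBound_K0]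
    have : ε * s ≤ ε * 1 := by nlinarith
    simp only [Real.exp_zero]
    linarith
  · rw [gronwallBound_of_K_ne_0 (ne_of_gt hKpos)]
    have hKs : K * s ≤ K := by nlinarith
    have h1 : Real.exp (K * s) - 1 ≤ (K * s) * Real.exp (K * s) := by
      have h3 := Real.add_one_le_exp (-(K * s))
      have h4 : Real.exp (-(K * s)) * Real.exp (K * s) = 1 := by
        rw [← Real.exp_add]; simp
      nlinarith [Real.exp_pos (K * s)]
    have h2 : Real.exp (K * s) ≤ Real.exp K := Real.exp_le_exp.mpr hKs
    have hεK : 0 ≤ ε / K := div_nonneg hε hKpos.le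
    calc 0 * Real.exp (K * s) + ε / K * (Real.exp (K * s) - 1)
        ≤ ε / K * ((K * s) * Real.exp (K * s)) := by
          nlinarith
      _ = ε * (s * Real.exp (K * s)) := by field_simp
      _ ≤ ε * (1 * Real.exp K) := by
          apply mul_le_mul_of_nonneg_left _ hε
          have := Real.exp_pos (K * s)
          nlinarith
      _ = ε * Real.exp K := by ring


/-- Almost-period estimate for characteristics (Gronwall). -/
theorem stmt_7 (a : ℝ → ℝ → ℝ) (Λ₀ L μ τ : ℝ) (hΛ : 0 < Λ₀) (hL : 0 ≤ L)
    (ha : Continuous (Function.uncurry a))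
    (hlb : ∀ ξ s, Λ₀ ≤ |a ξ s|)
    (hLip : ∀ ξ s s', |a ξ s - a ξ s'| ≤ L * |s - s'|)
    (hap : ∀ ξ s, |a ξ (s + τ) - a ξ s| ≤ μ)
    (ω : ℝ → ℝ → ℝ → ℝ)
    (hode : ∀ ξ x t, HasDerivAt (fun ξ' => ω ξ' x t) (1 / a ξ (ω ξ x t)) ξ)
    (hinit : ∀ x t, ω x x t = t) :
    ∀ η ∈ Set.Icc (0:ℝ) 1, ∀ x ∈ Set.Icc (0:ℝ) 1, ∀ t : ℝ,
      |ω η x t + τ - ω η x (t + τ)| ≤ (μ / Λ₀^2) * Real.exp (L / Λ₀^2) := by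
  intro η hη x hx t
  have hμ : 0 ≤ μ := le_trans (abs_nonneg _) (hap 0 0)
  set K : ℝ := L / Λ₀ ^ 2 with hK
  set ε : ℝ := μ / Λ₀ ^ 2 with hε
  have hK0 : 0 ≤ K := div_nonneg hL (by positivity)
  have hε0 : 0 ≤ ε := div_nonneg hμ (by positivity)
  set u : ℝ → ℝ := fun ξ => ω ξ x t + τ - ω ξ x (t + τ) with hu
  set u' : ℝ → ℝ := fun ξ => 1 / a ξ (ω ξ x t) - 1 / a ξ (ω ξ x (t + τ)) with hu'
  have hder : ∀ ξ, HasDerivAt u (u' ξ) ξ := fun ξ =>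
    ((hode ξ x t).add_const τ).sub (hode ξ x (t + τ))
  have hbound : ∀ ξ, |u' ξ| ≤ K * |u ξ| + ε := by
    intro ξ
    set w₁ := ω ξ x t
    set w₂ := ω ξ x (t + τ)
    have ha1 : Λ₀ ≤ |a ξ w₁| := hlb ξ w₁
    have ha2 : Λ₀ ≤ |a ξ w₂| := hlb ξ w₂
    have ha1ne : a ξ w₁ ≠ 0 := by intro h; rw [h] at ha1; simp at ha1; linarith
    have ha2ne : a ξ w₂ ≠ 0 := by intro h; rw [h] at ha2; simp at ha2; linarith
    have key : u' ξ = (a ξ w₂ - a ξ w₁) / (a ξ w₁ * a ξ w₂) := by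
      simp only [hu']
      show 1 / a ξ w₁ - 1 / a ξ w₂ = (a ξ w₂ - a ξ w₁) / (a ξ w₁ * a ξ w₂)
      rw [div_sub_div _ _ ha1ne ha2ne]; ring
    have hnum : |a ξ w₂ - a ξ w₁| ≤ L * |u ξ| + μ := by
      have h1 : |a ξ w₂ - a ξ (w₁ + τ)| ≤ L * |u ξ| := by
        have := hLip ξ w₂ (w₁ + τ)
        have heq : |w₂ - (w₁ + τ)| = |u ξ| := by
          show |w₂ - (w₁ + τ)| = |w₁ + τ - w₂|
          rw [abs_sub_comm]
        rwa [heq] at this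
      have h2 : |a ξ (w₁ + τ) - a ξ w₁| ≤ μ := hap ξ w₁
      calc |a ξ w₂ - a ξ w₁|
          ≤ |a ξ w₂ - a ξ (w₁ + τ)| + |a ξ (w₁ + τ) - a ξ w₁| := by
            apply abs_sub_le
        _ ≤ L * |u ξ| + μ := add_le_add h1 h2
    have hden : Λ₀ * Λ₀ ≤ |a ξ w₁| * |a ξ w₂| :=
      mul_le_mul ha1 ha2 hΛ.le (abs_nonneg _)
    have hfin : (L * |u ξ| + μ) / (Λ₀ * Λ₀) = K * |u ξ| + ε := by
      rw [hK, hε, pow_two]; ring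
    rw [key, abs_div, abs_mul, ← hfin]
    exact div_le_div₀ (by positivity) hnum (by positivity) hden
  have hx0 : u x = 0 := by simp [hu, hinit]
  have hmain := gronwall_two_sided u u' K ε x hder hbound hx0 η
  have hs1 : |η - x| ≤ 1 := by
    rw [abs_le]
    constructor <;> [linarith [hη.1, hη.2, hx.1, hx.2]; linarith [hη.1, hη.2, hx.1, hx.2]]
  calc |u η| ≤ gronwallBound 0 K ε |η - x| := hmain
    _ ≤ ε * Real.exp K := gronwallBound_le K ε _ hK0 hε0 (abs_nonneg _) hs1
    _ = (μ / Λ₀^2) * Real.exp (L / Λ₀^2) := rfl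
end

section
/- Let X be a Banach space, c ∈ [0,1), A_k : X → X bounded linear operators with ‖A_k w‖ ≤ c‖w‖ for all k and all w ∈ X, such that for every fixed w ∈ X the sequence (A_k w) converges in X, and let (X_k) be a convergent sequence in X. Then any sequence (W_k) in X satisfying the recursion W_{k+1} = A_k W_k + X_k converges in X. -/
open Filter

/-- If `a (k+1) ≤ c * a k + ε k` with `0 ≤ c < 1`, `a k ≥ 0`, and `ε → 0`, then `a → 0`. -/
lemma aux_tendsto_zero (c : ℝ) (hc0 : 0 ≤ c) (hc1 : c < 1) (a ε : ℕ → ℝ)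
    (ha0 : ∀ k, 0 ≤ a k) (hrec : ∀ k, a (k + 1) ≤ c * a k + ε k)
    (hε : Tendsto ε atTop (nhds 0)) :
    Tendsto a atTop (nhds 0) := by
  rw [Metric.tendsto_atTop]
  intro δ hδ
  have h1c : 0 < 1 - c := by linarith
  have hδ' : 0 < δ * (1 - c) / 2 := by positivity
  obtain ⟨N₁, hN₁⟩ := (Metric.tendsto_atTop.1 hε) (δ * (1 - c) / 2) hδ'
  have key : ∀ m, a (N₁ + m) ≤ c ^ m * a N₁ + δ / 2 := by
    intro m
    induction m with
    | zero => simp; nlinarith [ha0 N₁]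
    | succ m ih =>
      have h1 : a (N₁ + (m + 1)) ≤ c * a (N₁ + m) + ε (N₁ + m) := by
        rw [← Nat.add_assoc]; exact hrec (N₁ + m)
      have h2 : ε (N₁ + m) < δ * (1 - c) / 2 := by
        have := hN₁ (N₁ + m) (Nat.le_add_right _ _)
        rw [Real.dist_eq, sub_zero, abs_lt] at this
        exact this.2
      have h3 : c * a (N₁ + m) ≤ c * (c ^ m * a N₁ + δ / 2) :=
        mul_le_mul_of_nonneg_left ih hc0
      calc a (N₁ + (m + 1)) ≤ c * a (N₁ + m) + ε (N₁ + m) := h1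
      _ ≤ c * (c ^ m * a N₁ + δ / 2) + δ * (1 - c) / 2 := by linarith
      _ = c ^ (m + 1) * a N₁ + (c * (δ / 2) + δ * (1 - c) / 2) := by ring
      _ ≤ c ^ (m + 1) * a N₁ + δ / 2 := by nlinarith
  have hpow : Tendsto (fun m => c ^ m * a N₁) atTop (nhds 0) := by
    simpa using (tendsto_pow_atTop_nhds_zero_of_lt_one hc0 hc1).mul_const (a N₁)
  obtain ⟨N₂, hN₂⟩ := (Metric.tendsto_atTop.1 hpow) (δ / 2) (by positivity)
  refine ⟨N₁ + N₂, fun n hn => ?_⟩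
  have hm : n = N₁ + (n - N₁) := by omega
  have h4 := key (n - N₁)
  rw [← hm] at h4
  have h5 := hN₂ (n - N₁) (by omega)
  rw [Real.dist_eq, sub_zero, abs_lt] at h5
  rw [Real.dist_eq, sub_zero, abs_of_nonneg (ha0 n)]
  linarith [h4, h5.2]

/-- Linear fiber contraction principle. -/
theorem stmt_10 {X : Type*} [NormedAddCommGroup X] [NormedSpace ℝ X] [CompleteSpace X]
    (c : ℝ) (hc0 : 0 ≤ c) (hc1 : c < 1)
    (A : ℕ → X →L[ℝ] X) (hA : ∀ k (w : X), ‖A k w‖ ≤ c * ‖w‖)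
    (hAconv : ∀ w : X, ∃ y : X, Filter.Tendsto (fun k => A k w) Filter.atTop (nhds y))
    (Xs : ℕ → X) (hXconv : ∃ x : X, Filter.Tendsto Xs Filter.atTop (nhds x))
    (W : ℕ → X) (hW : ∀ k, W (k + 1) = A k (W k) + Xs k) :
    ∃ L : X, Filter.Tendsto W Filter.atTop (nhds L) := by
  classical
  obtain ⟨x, hx⟩ := hXconv
  -- limit operator
  set B : X → X := fun w => (hAconv w).choose with hB
  have hBt : ∀ w, Tendsto (fun k => A k w) atTop (nhds (B w)) := fun w => (hAconv w).choose_spec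
  have hBsub : ∀ u v, B (u - v) = B u - B v := by
    intro u v
    have h1 : Tendsto (fun k => A k (u - v)) atTop (nhds (B u - B v)) := by
      have := (hBt u).sub (hBt v)
      simpa [map_sub] using this
    exact tendsto_nhds_unique (hBt (u - v)) h1
  have hBnorm : ∀ w, ‖B w‖ ≤ c * ‖w‖ := by
    intro w
    exact le_of_tendsto ((hBt w).norm) (Filter.Eventually.of_forall fun k => hA k w)
  -- the contraction
  have hlip : LipschitzWith c.toNNReal (fun w => B w + x) := by
    refine LipschitzWith.of_dist_le_mul fun u v => ?_
    simp only [dist_eq_norm, add_sub_add_right_eq_sub]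
    have : ‖B u - B v‖ ≤ c * ‖u - v‖ := by rw [← hBsub]; exact hBnorm (u - v)
    simpa [Real.coe_toNNReal c hc0] using this
  have hcontr : ContractingWith c.toNNReal (fun w => B w + x) := by
    constructor
    · rwa [← Real.toNNReal_one, Real.toNNReal_lt_toNNReal_iff one_pos]
    · exact hlip
  have : Nonempty X := ⟨0⟩
  set L := hcontr.fixedPoint (fun w => B w + x) with hL
  have hfix : B L + x = L := hcontr.fixedPoint_isFixedPt
  refine ⟨L, ?_⟩
  -- recursion estimate
  set ε : ℕ → ℝ := fun k => ‖A k L - B L‖ + ‖Xs k - x‖ with hεdef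
  have hεto : Tendsto ε atTop (nhds 0) := by
    have h1 : Tendsto (fun k => ‖A k L - B L‖) atTop (nhds 0) := by
      have := (hBt L).sub (tendsto_const_nhds (x := B L))
      simpa using this.norm
    have h2 : Tendsto (fun k => ‖Xs k - x‖) atTop (nhds 0) := by
      have := hx.sub (tendsto_const_nhds (x := x))
      simpa using this.norm
    simpa using h1.add h2
  have hrec : ∀ k, ‖W (k + 1) - L‖ ≤ c * ‖W k - L‖ + ε k := by
    intro k
    have hx' : x = L - B L := by rw [eq_sub_iff_add_eq, add_comm]; exact hfix
    have h1 : W (k + 1) - L = (A k (W k) - A k L) + (A k L - B L) + (Xs k - x) := by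
      rw [hW k, hx']; abel
    calc ‖W (k + 1) - L‖ = ‖(A k (W k) - A k L) + (A k L - B L) + (Xs k - x)‖ := by rw [h1]
    _ ≤ ‖A k (W k) - A k L‖ + ‖A k L - B L‖ + ‖Xs k - x‖ := norm_add₃_le
    _ ≤ c * ‖W k - L‖ + ε k := by
        have : ‖A k (W k) - A k L‖ ≤ c * ‖W k - L‖ := by
          rw [← map_sub]; exact hA k (W k - L)
        simp only [hεdef]; linarith
  have := aux_tendsto_zero c hc0 hc1 (fun k => ‖W k - L‖) ε (fun k => norm_nonneg _) hrec hεto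
  rwa [← tendsto_iff_norm_sub_tendsto_zero] at this
end

section
/- Let Y be the Banach space BC(ℝ, ℝⁿ) and X = BC¹(ℝ, ℝⁿ) ⊆ Y. Suppose G : Y → Y is a bounded linear operator mapping X into X such that there exist bounded linear operators W, G₁ : Y → Y with (d/dt)(G y) = W y + G₁ y′ for all y ∈ X, and suppose ‖G‖_{L(Y)} < 1 and ‖G₁‖_{L(Y)} < 1. Then I − G is a bijective bounded linear operator on X, and there exist σ ∈ (0,1) and γ ∈ (0,1) with ‖(I − G)⁻¹ y‖_{BC¹} ≤ (σ(1 − γ))⁻¹ ‖y‖_{BC¹} for all y ∈ X, where one may take any σ with ‖G‖ + σ‖W‖ < 1 and γ = max{‖G‖ + σ‖W‖, ‖G₁‖}. -/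
/-- Auxiliary iteration sequence for the fixed-point construction. -/
noncomputable def stmt11IterSeq {n : ℕ}
    (G W G₁ : (BoundedContinuousFunction ℝ (Fin n → ℝ)) →L[ℝ] (BoundedContinuousFunction ℝ (Fin n → ℝ)))
    (z z' : BoundedContinuousFunction ℝ (Fin n → ℝ)) :
    ℕ → (BoundedContinuousFunction ℝ (Fin n → ℝ)) × (BoundedContinuousFunction ℝ (Fin n → ℝ))
  | 0 => (z, z')
  | k + 1 =>
    (z + G (stmt11IterSeq G W G₁ z z' k).1,
     z' + W (stmt11IterSeq G W G₁ z z' k).1 + G₁ (stmt11IterSeq G W G₁ z z' k).2)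

set_option maxHeartbeats 1000000

/-- Bijectivity of `I − G` on `BC¹(ℝ,ℝⁿ)` with the `σ`-norm contraction estimate. -/
theorem stmt_11 {n : ℕ}
    (G W G₁ : (BoundedContinuousFunction ℝ (Fin n → ℝ)) →L[ℝ] (BoundedContinuousFunction ℝ (Fin n → ℝ)))
    (hG : ‖G‖ < 1) (hG₁ : ‖G₁‖ < 1)
    (hd : ∀ y y' : BoundedContinuousFunction ℝ (Fin n → ℝ), (∀ t, HasDerivAt (⇑y) (y' t) t) →
      ∀ t, HasDerivAt (⇑(G y)) ((W y + G₁ y') t) t)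
    (σ : ℝ) (hσ0 : 0 < σ) (hσ1 : σ < 1) (hσW : ‖G‖ + σ * ‖W‖ < 1) :
    max (‖G‖ + σ * ‖W‖) ‖G₁‖ < 1 ∧
    (∀ z : BoundedContinuousFunction ℝ (Fin n → ℝ), (∃ z' : BoundedContinuousFunction ℝ (Fin n → ℝ), ∀ t, HasDerivAt (⇑z) (z' t) t) →
      ∃! y : BoundedContinuousFunction ℝ (Fin n → ℝ),
        (∃ y' : BoundedContinuousFunction ℝ (Fin n → ℝ), ∀ t, HasDerivAt (⇑y) (y' t) t) ∧ y - G y = z) ∧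
    (∀ y y' z z' : BoundedContinuousFunction ℝ (Fin n → ℝ),
      (∀ t, HasDerivAt (⇑y) (y' t) t) → (∀ t, HasDerivAt (⇑z) (z' t) t) →
      y - G y = z →
      ‖y‖ + ‖y'‖ ≤ (σ * (1 - max (‖G‖ + σ * ‖W‖) ‖G₁‖))⁻¹ * (‖z‖ + ‖z'‖)) := by
  set Y := BoundedContinuousFunction ℝ (Fin n → ℝ)
  set γ : ℝ := max (‖G‖ + σ * ‖W‖) ‖G₁‖ with hγdef
  have hγ1 : γ < 1 := max_lt hσW hG₁
  have hγ0 : (0 : ℝ) ≤ γ := le_trans (norm_nonneg G₁) (le_max_right _ _)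
  have hGγ : ‖G‖ + σ * ‖W‖ ≤ γ := le_max_left _ _
  have hG₁γ : ‖G₁‖ ≤ γ := le_max_right _ _
  refine ⟨hγ1, ?_, ?_⟩
  · -- existence and uniqueness
    rintro z ⟨z', hz'⟩
    have hex : ∀ (T : Y →L[ℝ] Y), ‖T‖ < 1 → ∀ v : Y, ∃ x : Y, x - T x = v := by
      intro T hT v
      refine ⟨(↑(Units.oneSub T hT)⁻¹ : Y →L[ℝ] Y) v, ?_⟩
      have h := congrArg (fun S : Y →L[ℝ] Y => S v) (Units.oneSub T hT).mul_inv
      simpa [ContinuousLinearMap.mul_apply, Units.val_oneSub,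
        ContinuousLinearMap.sub_apply] using h
    obtain ⟨y, hyz⟩ := hex G hG z
    obtain ⟨w, hw⟩ := hex G₁ hG₁ (z' + W y)
    have hweq : w = z' + W y + G₁ w := sub_eq_iff_eq_add.mp hw
    set p := stmt11IterSeq G W G₁ z z' with hp
    -- derivative of iterates
    have hpder : ∀ k t, HasDerivAt (⇑(p k).1) ((p k).2 t) t := by
      intro k
      induction k with
      | zero => exact hz'
      | succ k ih =>
        intro t
        have h1 : HasDerivAt (fun s => z s + (G (p k).1) s)
            (z' t + (W (p k).1 + G₁ (p k).2) t) t := (hz' t).add (hd _ _ ih t)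
        have : HasDerivAt (⇑(z + G (p k).1))
            ((z' + W (p k).1 + G₁ (p k).2) t) t := by
          simpa [BoundedContinuousFunction.coe_add, Pi.add_apply, Pi.add_def, add_assoc] using h1
        simpa [hp, stmt11IterSeq] using this
    -- contraction bound
    set C : ℝ := ‖z - y‖ + σ * ‖z' - w‖ with hC
    have hbound : ∀ k, ‖(p k).1 - y‖ + σ * ‖(p k).2 - w‖ ≤ γ ^ k * C := by
      intro k
      induction k with
      | zero => simp [hp, stmt11IterSeq, hC]
      | succ k ih =>
        have e1 : (p (k+1)).1 - y = G ((p k).1 - y) := by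
          have hyeq : y = z + G y := by rw [← hyz]; abel
          simp only [hp, stmt11IterSeq, map_sub]
          conv_lhs => rw [hyeq]
          abel
        have e2 : (p (k+1)).2 - w = W ((p k).1 - y) + G₁ ((p k).2 - w) := by
          simp only [hp, stmt11IterSeq, map_sub]
          conv_lhs => rw [hweq]
          abel
        have b1 : ‖G ((p k).1 - y)‖ ≤ ‖G‖ * ‖(p k).1 - y‖ := G.le_opNorm _
        have b2 : ‖W ((p k).1 - y)‖ ≤ ‖W‖ * ‖(p k).1 - y‖ := W.le_opNorm _
        have b3 : ‖G₁ ((p k).2 - w)‖ ≤ ‖G₁‖ * ‖(p k).2 - w‖ := G₁.le_opNorm _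
        have b4 : ‖W ((p k).1 - y) + G₁ ((p k).2 - w)‖ ≤
            ‖W ((p k).1 - y)‖ + ‖G₁ ((p k).2 - w)‖ := norm_add_le _ _
        have hnn1 : (0:ℝ) ≤ ‖(p k).1 - y‖ := norm_nonneg _
        have hnn2 : (0:ℝ) ≤ ‖(p k).2 - w‖ := norm_nonneg _
        have hWnn : (0:ℝ) ≤ ‖W‖ := W.opNorm_nonneg
        have key : ‖(p (k+1)).1 - y‖ + σ * ‖(p (k+1)).2 - w‖ ≤
            γ * (‖(p k).1 - y‖ + σ * ‖(p k).2 - w‖) := by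
          rw [e1, e2]
          nlinarith [b1, mul_le_mul_of_nonneg_left b4 hσ0.le,
            mul_le_mul_of_nonneg_left b2 hσ0.le, mul_le_mul_of_nonneg_left b3 hσ0.le,
            mul_le_mul_of_nonneg_right hGγ hnn1,
            mul_le_mul_of_nonneg_left (mul_le_mul_of_nonneg_right hG₁γ hnn2) hσ0.le]
        calc ‖(p (k+1)).1 - y‖ + σ * ‖(p (k+1)).2 - w‖
            ≤ γ * (‖(p k).1 - y‖ + σ * ‖(p k).2 - w‖) := key
          _ ≤ γ * (γ ^ k * C) := by
              exact mul_le_mul_of_nonneg_left ih hγ0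
          _ = γ ^ (k+1) * C := by ring
        -- done
    have hCnn : (0:ℝ) ≤ C := by
      have := norm_nonneg (z - y)
      have := norm_nonneg (z' - w)
      nlinarith
    have hγpow : Filter.Tendsto (fun k : ℕ => γ ^ k * C) Filter.atTop (nhds 0) := by
      have := (tendsto_pow_atTop_nhds_zero_of_lt_one hγ0 hγ1).mul_const C
      simpa using this
    have hten1 : Filter.Tendsto (fun k => (p k).1) Filter.atTop (nhds y) := by
      rw [tendsto_iff_norm_sub_tendsto_zero]
      refine squeeze_zero (fun k => norm_nonneg _) (fun k => ?_) hγpow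
      have := hbound k
      nlinarith [norm_nonneg ((p k).2 - w)]
    have hten2 : Filter.Tendsto (fun k => (p k).2) Filter.atTop (nhds w) := by
      rw [tendsto_iff_norm_sub_tendsto_zero]
      have hγpow' : Filter.Tendsto (fun k : ℕ => γ ^ k * (C / σ)) Filter.atTop (nhds 0) := by
        have := (tendsto_pow_atTop_nhds_zero_of_lt_one hγ0 hγ1).mul_const (C / σ)
        simpa using this
      refine squeeze_zero (fun k => norm_nonneg _) (fun k => ?_) hγpow'
      have hb := hbound k
      have h2 : σ * ‖(p k).2 - w‖ ≤ γ ^ k * C := by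
        nlinarith [norm_nonneg ((p k).1 - y)]
      calc ‖(p k).2 - w‖ = (σ * ‖(p k).2 - w‖) / σ := by field_simp
        _ ≤ (γ ^ k * C) / σ := by
            exact div_le_div_of_nonneg_right h2 hσ0.le |>.trans_eq rfl
        _ = γ ^ k * (C / σ) := by ring
    -- uniform convergence and derivative of the limit
    have hu1 : TendstoUniformly (fun k => ⇑(p k).1) (⇑y) Filter.atTop :=
      BoundedContinuousFunction.tendsto_iff_tendstoUniformly.mp hten1
    have hu2 : TendstoUniformly (fun k => ⇑(p k).2) (⇑w) Filter.atTop :=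
      BoundedContinuousFunction.tendsto_iff_tendstoUniformly.mp hten2
    have hyder : ∀ t, HasDerivAt (⇑y) (w t) t := by
      refine hasDerivAt_of_tendstoUniformly (f := fun k => ⇑(p k).1) hu2 ?_ ?_
      · exact Filter.Eventually.of_forall fun k => hpder k
      · intro t
        exact (hu1.tendsto_at t)
    refine ⟨y, ⟨⟨w, hyder⟩, hyz⟩, ?_⟩
    rintro y₂ ⟨-, hy₂⟩
    have h0 : y₂ - y = G (y₂ - y) := by
      rw [map_sub]
      have h : y₂ - G y₂ = y - G y := by rw [hy₂, hyz]
      rwa [sub_eq_sub_iff_sub_eq_sub] at h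
    by_contra hne
    have hpos : 0 < ‖y₂ - y‖ := by
      rw [norm_pos_iff]
      exact sub_ne_zero.mpr hne
    have hle : ‖y₂ - y‖ ≤ ‖G‖ * ‖y₂ - y‖ := by
      conv_lhs => rw [h0]
      exact G.le_opNorm _
    nlinarith
  · -- the estimate
    intro y y' z z' hy' hz' hyz
    have hz'eq : z' = y' - (W y + G₁ y') := by
      ext t
      have h1 : HasDerivAt (⇑z) (y' t - (W y + G₁ y') t) t := by
        have := (hy' t).sub (hd y y' hy' t)
        have hcoe : ⇑z = fun s => y s - (G y) s := by
          rw [← hyz]; ext s; simp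
        rw [hcoe]
        exact this
      have := (hz' t).unique h1
      simp [this]
    have e1 : ‖y‖ ≤ ‖z‖ + ‖G‖ * ‖y‖ := by
      have hyeq : y = z + G y := by rw [← hyz]; abel
      calc ‖y‖ = ‖z + G y‖ := by rw [← hyeq]
        _ ≤ ‖z‖ + ‖G y‖ := norm_add_le _ _
        _ ≤ ‖z‖ + ‖G‖ * ‖y‖ := by linarith [G.le_opNorm y]
    have e2 : ‖y'‖ ≤ ‖z'‖ + ‖W‖ * ‖y‖ + ‖G₁‖ * ‖y'‖ := by
      have hy'eq : y' = z' + (W y + G₁ y') := by rw [hz'eq]; abel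
      calc ‖y'‖ = ‖z' + (W y + G₁ y')‖ := by rw [← hy'eq]
        _ ≤ ‖z'‖ + (‖W y‖ + ‖G₁ y'‖) :=
            le_trans (norm_add_le _ _) (by linarith [norm_add_le (W y) (G₁ y')])
        _ ≤ ‖z'‖ + ‖W‖ * ‖y‖ + ‖G₁‖ * ‖y'‖ := by
            linarith [W.le_opNorm y, G₁.le_opNorm y']
    have hpos : 0 < σ * (1 - γ) := mul_pos hσ0 (by linarith)
    rw [inv_mul_eq_div, le_div_iff₀ hpos]
    have hynn : (0:ℝ) ≤ ‖y‖ := norm_nonneg y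
    have hy'nn : (0:ℝ) ≤ ‖y'‖ := norm_nonneg y'
    have hz'nn : (0:ℝ) ≤ ‖z'‖ := norm_nonneg z'
    have k1 : σ * ‖y'‖ ≤ σ * ‖z'‖ + σ * ‖W‖ * ‖y‖ + ‖G₁‖ * (σ * ‖y'‖) := by
      nlinarith [mul_le_mul_of_nonneg_left e2 hσ0.le]
    have k3 : (‖G‖ + σ * ‖W‖) * ‖y‖ ≤ γ * ‖y‖ := mul_le_mul_of_nonneg_right hGγ hynn
    have k4 : ‖G₁‖ * (σ * ‖y'‖) ≤ γ * (σ * ‖y'‖) :=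
      mul_le_mul_of_nonneg_right hG₁γ (mul_nonneg hσ0.le hy'nn)
    have k5 : (‖y‖ + σ * ‖y'‖) * (1 - γ) ≤ ‖z‖ + σ * ‖z'‖ := by nlinarith
    have k6 : (σ * ‖y‖ + σ * ‖y'‖) * (1 - γ) ≤ (‖y‖ + σ * ‖y'‖) * (1 - γ) := by
      have h6 : σ * ‖y‖ + σ * ‖y'‖ ≤ ‖y‖ + σ * ‖y'‖ := by nlinarith
      exact mul_le_mul_of_nonneg_right h6 (by linarith)
    have h7 : σ * ‖z'‖ ≤ ‖z'‖ := by nlinarith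
    calc (‖y‖ + ‖y'‖) * (σ * (1 - γ)) = (σ * ‖y‖ + σ * ‖y'‖) * (1 - γ) := by ring
      _ ≤ (‖y‖ + σ * ‖y'‖) * (1 - γ) := k6
      _ ≤ ‖z‖ + σ * ‖z'‖ := k5
      _ ≤ ‖z‖ + ‖z'‖ := by linarith
end
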